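/- Let A be an n×n copositive matrix and let w ∈ ℝ^n be a nonzero vector. Then A is irreducible with respect to the rank-one matrix w w^T if and only if there exists a minimal zero u of A with w^T u ≠ 0. -/

import Mathlib

open Matrix

/-- A symmetric matrix `A` is copositive if `xᵀ A x ≥ 0` for all entrywise nonnegative `x`. -/
def Copositive {n : ℕ} (A : Matrix (Fin n) (Fin n) ℝ) : Prop :=
  A.IsSymm ∧ ∀ x : Fin n → ℝ, (∀ i, 0 ≤ x i) → 0 ≤ x ⬝ᵥ A.mulVec x

/-- The support of a vector. -/
def Supp {ι : Type*} (u : ι → ℝ) : Set ι := {i | u i ≠ 0}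

/-- A zero of a copositive matrix: a nonzero nonnegative vector `u` with `uᵀ A u = 0`. -/
def IsZeroOf {n : ℕ} (A : Matrix (Fin n) (Fin n) ℝ) (u : Fin n → ℝ) : Prop :=
  u ≠ 0 ∧ (∀ i, 0 ≤ u i) ∧ u ⬝ᵥ A.mulVec u = 0

/-- A minimal zero: a zero such that no zero has support strictly contained in its support. -/
def IsMinimalZeroOf {n : ℕ} (A : Matrix (Fin n) (Fin n) ℝ) (u : Fin n → ℝ) : Prop :=
  IsZeroOf A u ∧ ¬ ∃ v, IsZeroOf A v ∧ Supp v ⊂ Supp u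

/-- The principal submatrix of `A` with rows and columns in `I`. -/
def subMat {n : ℕ} (A : Matrix (Fin n) (Fin n) ℝ) (I : Finset (Fin n)) :
    Matrix {i // i ∈ I} {i // i ∈ I} ℝ :=
  A.submatrix Subtype.val Subtype.val

/-- The subvector of `u` with indices in `I`. -/
def subVec {n : ℕ} (u : Fin n → ℝ) (I : Finset (Fin n)) : {i // i ∈ I} → ℝ :=
  fun i => u i.val

/-- Irreducibility of a copositive matrix `A` with respect to a set `M` of matrices. -/
def IrreducibleWrtSet {n : ℕ} (A : Matrix (Fin n) (Fin n) ℝ)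
    (M : Set (Matrix (Fin n) (Fin n) ℝ)) : Prop :=
  ¬ ∃ γ : ℝ, 0 < γ ∧ ∃ B ∈ M, B ≠ 0 ∧ Copositive (A - γ • B)

/-- Irreducibility of a copositive matrix `A` with respect to a single matrix `M`. -/
def IrreducibleWrtMat {n : ℕ} (A M : Matrix (Fin n) (Fin n) ℝ) : Prop :=
  ¬ ∃ γ : ℝ, 0 < γ ∧ Copositive (A - γ • M)

/-- An extremal element of a cone `K` of vectors. -/
def IsExtremalIn {ι : Type*} (K : Set (ι → ℝ)) (u : ι → ℝ) : Prop :=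
  u ∈ K ∧ u ≠ 0 ∧ ∀ v w, v ∈ K → w ∈ K → u = v + w →
    (∃ a : ℝ, 0 ≤ a ∧ v = a • u) ∧ (∃ b : ℝ, 0 ≤ b ∧ w = b • u)

/-- The matrix with entries 1 at positions `(i,j)` and `(j,i)` and 0 elsewhere. -/
def Eij {n : ℕ} (i j : Fin n) : Matrix (Fin n) (Fin n) ℝ :=
  fun a b => if (a = i ∧ b = j) ∨ (a = j ∧ b = i) then 1 else 0



open Finset

variable {n : ℕ}

lemma symm_swap (A : Matrix (Fin n) (Fin n) ℝ) (hA : A.IsSymm) (u v : Fin n → ℝ) :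
    u ⬝ᵥ A.mulVec v = v ⬝ᵥ A.mulVec u := by
  rw [Matrix.dotProduct_mulVec, ← Matrix.mulVec_transpose, hA, dotProduct_comm]

lemma quad_expand (A : Matrix (Fin n) (Fin n) ℝ) (hA : A.IsSymm) (u v : Fin n → ℝ) (t : ℝ) :
    (u + t • v) ⬝ᵥ A.mulVec (u + t • v)
      = u ⬝ᵥ A.mulVec u + 2 * t * (v ⬝ᵥ A.mulVec u) + t ^ 2 * (v ⬝ᵥ A.mulVec v) := by
  have h := symm_swap A hA u v
  simp only [Matrix.mulVec_add, Matrix.mulVec_smul, dotProduct_add,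
    add_dotProduct, smul_dotProduct, dotProduct_smul, smul_eq_mul]
  rw [h]; ring

lemma quad_vecMulVec (v x : Fin n → ℝ) :
    x ⬝ᵥ (vecMulVec v v).mulVec x = (v ⬝ᵥ x) ^ 2 := by
  simp only [dotProduct, Matrix.mulVec, Matrix.vecMulVec_apply, sq]
  rw [Finset.sum_mul]
  congr 1; ext i
  rw [Finset.mul_sum, Finset.mul_sum]
  congr 1; ext j; ring



lemma quad_smul (B : Matrix (Fin n) (Fin n) ℝ) (s : ℝ) (x : Fin n → ℝ) :
    (s • x) ⬝ᵥ B.mulVec (s • x) = s ^ 2 * (x ⬝ᵥ B.mulVec x) := by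
  simp only [Matrix.mulVec_smul, smul_dotProduct, dotProduct_smul, smul_eq_mul]
  ring

lemma vecMulVec_mulVec' (v x : Fin n → ℝ) : (vecMulVec v v).mulVec x = (v ⬝ᵥ x) • v := by
  funext i
  simp only [Matrix.mulVec, Matrix.vecMulVec_apply, dotProduct, Pi.smul_apply, smul_eq_mul]
  rw [Finset.sum_mul]
  congr 1; ext j; ring

lemma aux_sign {a b ε : ℝ} (hε : 0 < ε)
    (h : ∀ t : ℝ, 0 < t → t ≤ ε → 0 ≤ 2 * t * a + t ^ 2 * b) : 0 ≤ a := by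
  by_contra ha
  push_neg at ha
  set t := min ε (-a / (|b| + 1)) with ht
  have hb1 : 0 < |b| + 1 := by positivity
  have ht0 : 0 < t := lt_min hε (div_pos (by linarith) hb1)
  have h1 := h t ht0 (min_le_left _ _)
  have h2 : t ≤ -a / (|b| + 1) := min_le_right _ _
  have h3 : t * (|b| + 1) ≤ -a := by
    rw [← le_div_iff₀ hb1]; exact h2
  have h4 : b ≤ |b| := le_abs_self b
  have h5 : t ^ 2 * b ≤ t * (-a) := by
    calc t ^ 2 * b ≤ t ^ 2 * (|b| + 1) := by nlinarith [sq_nonneg t]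
    _ = t * (t * (|b| + 1)) := by ring
    _ ≤ t * (-a) := mul_le_mul_of_nonneg_left h3 ht0.le
  have h6 : t * a < 0 := mul_neg_of_pos_of_neg ht0 ha
  linarith

lemma aux_sign_zero {a b ε : ℝ} (hε : 0 < ε)
    (h : ∀ t : ℝ, |t| ≤ ε → 0 ≤ 2 * t * a + t ^ 2 * b) : a = 0 := by
  have h1 : 0 ≤ a := aux_sign hε (fun t ht0 htε => h t (by rw [abs_of_pos ht0]; exact htε))
  have h2 : 0 ≤ -a := by
    apply aux_sign hε (b := b)
    intro t ht0 htε
    have := h (-t) (by rw [abs_neg, abs_of_pos ht0]; exact htε)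
    nlinarith
  linarith
lemma single_dot (x : Fin n → ℝ) (i : Fin n) : (Pi.single i 1 : Fin n → ℝ) ⬝ᵥ x = x i := by
  simp [single_dotProduct]

lemma mulVec_nonneg_of_zero {A : Matrix (Fin n) (Fin n) ℝ} (hA : Copositive A)
    {u : Fin n → ℝ} (hu : IsZeroOf A u) (i : Fin n) : 0 ≤ A.mulVec u i := by
  have key : ∀ t : ℝ, 0 < t → t ≤ 1 →
      0 ≤ 2 * t * (A.mulVec u i) + t ^ 2 * ((Pi.single i 1 : Fin n → ℝ) ⬝ᵥ A.mulVec (Pi.single i 1)) := by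
    intro t ht0 _
    have hx : ∀ j, 0 ≤ (u + t • (Pi.single i 1 : Fin n → ℝ)) j := by
      intro j
      have h1 := hu.2.1 j
      have h2 : (0:ℝ) ≤ (Pi.single i 1 : Fin n → ℝ) j := by
        rcases eq_or_ne j i with rfl | h
        · simp
        · simp [Pi.single_eq_of_ne h]
      simp only [Pi.add_apply, Pi.smul_apply, smul_eq_mul]
      nlinarith
    have := hA.2 _ hx
    rwa [quad_expand A hA.1 u _ t, hu.2.2, single_dot, zero_add] at this
  exact aux_sign one_pos key

lemma mulVec_eq_zero_of_zero {A : Matrix (Fin n) (Fin n) ℝ} (hA : Copositive A)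
    {u : Fin n → ℝ} (hu : IsZeroOf A u) {i : Fin n} (hi : u i ≠ 0) : A.mulVec u i = 0 := by
  have hipos : 0 < u i := (hu.2.1 i).lt_of_ne (Ne.symm hi)
  have key : ∀ t : ℝ, |t| ≤ u i →
      0 ≤ 2 * t * (A.mulVec u i) + t ^ 2 * ((Pi.single i 1 : Fin n → ℝ) ⬝ᵥ A.mulVec (Pi.single i 1)) := by
    intro t ht
    have hx : ∀ j, 0 ≤ (u + t • (Pi.single i 1 : Fin n → ℝ)) j := by
      intro j
      simp only [Pi.add_apply, Pi.smul_apply, smul_eq_mul]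
      rcases eq_or_ne j i with rfl | h
      · simp only [Pi.single_eq_same, mul_one]
        have := neg_abs_le t
        linarith
      · simp only [Pi.single_eq_of_ne h, mul_zero, add_zero]
        exact hu.2.1 j
    have := hA.2 _ hx
    rwa [quad_expand A hA.1 u _ t, hu.2.2, single_dot, zero_add] at this
  exact aux_sign_zero hipos key

lemma cross_zero {A : Matrix (Fin n) (Fin n) ℝ} (hA : Copositive A)
    {u : Fin n → ℝ} (hu : IsZeroOf A u) (v : Fin n → ℝ)
    (hsupp : ∀ i, v i ≠ 0 → u i ≠ 0) : v ⬝ᵥ A.mulVec u = 0 := by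
  apply Finset.sum_eq_zero
  intro i _
  by_cases hvi : v i = 0
  · simp [hvi]
  · rw [mulVec_eq_zero_of_zero hA hu (hsupp i hvi), mul_zero]
lemma dot_eq_zero_of_zero (A : Matrix (Fin n) (Fin n) ℝ) (hA : Copositive A) (w : Fin n → ℝ)
    (hmin : ∀ u, IsMinimalZeroOf A u → w ⬝ᵥ u = 0) :
    ∀ u, IsZeroOf A u → w ⬝ᵥ u = 0 := by
  suffices H : ∀ (k : ℕ) (u : Fin n → ℝ), IsZeroOf A u →
      (univ.filter fun i => u i ≠ 0).card ≤ k → w ⬝ᵥ u = 0 from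
    fun u hu => H _ u hu le_rfl
  intro k
  induction k with
  | zero =>
    intro u hu hcard
    exfalso
    obtain ⟨i, hi⟩ : ∃ i, u i ≠ 0 := Function.ne_iff.mp hu.1
    have : i ∈ univ.filter fun i => u i ≠ 0 := by simp [hi]
    have := Finset.card_pos.mpr ⟨i, this⟩
    omega
  | succ k IH =>
    intro u hu hcard
    by_cases hminu : IsMinimalZeroOf A u
    · exact hmin u hminu
    · have hex : ∃ v, IsZeroOf A v ∧ Supp v ⊂ Supp u := by
        by_contra h; exact hminu ⟨hu, h⟩
      obtain ⟨v, hv, hsub⟩ := hex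
      have hVU : ∀ i, v i ≠ 0 → u i ≠ 0 := fun i hi => hsub.1 hi
      set Fv := univ.filter fun i => v i ≠ 0 with hFv
      set Fu := univ.filter fun i => u i ≠ 0 with hFu
      have hFvu : Fv ⊆ Fu := fun i hi => by
        simp only [hFv, hFu, mem_filter, mem_univ, true_and] at *
        exact hVU i hi
      have hFvne : Fv.Nonempty := by
        obtain ⟨i, hi⟩ : ∃ i, v i ≠ 0 := Function.ne_iff.mp hv.1
        exact ⟨i, by simp [hFv, hi]⟩
      -- card Fv ≤ k
      have hFvFu : Fv ⊂ Fu := by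
        refine Finset.ssubset_iff_subset_ne.mpr ⟨hFvu, fun he => ?_⟩
        apply hsub.2
        intro i hi
        have : i ∈ Fu := by simpa [hFu, Supp] using hi
        rw [← he] at this
        simpa [hFv, Supp] using this
      have hcardv : Fv.card ≤ k := by
        have := Finset.card_lt_card hFvFu
        omega
      obtain ⟨i₀, hi₀Fv, hi₀min⟩ := Finset.exists_min_image Fv (fun i => u i / v i) hFvne
      have hvi₀ : 0 < v i₀ := by
        have : v i₀ ≠ 0 := by simpa [hFv] using hi₀Fv
        exact (hv.2.1 i₀).lt_of_ne (Ne.symm this)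
      have hui₀ : 0 < u i₀ := by
        have : u i₀ ≠ 0 := hVU i₀ (by simpa [hFv] using hi₀Fv)
        exact (hu.2.1 i₀).lt_of_ne (Ne.symm this)
      set t₀ := u i₀ / v i₀ with ht₀def
      have ht₀ : 0 < t₀ := div_pos hui₀ hvi₀
      set u' := u + (-t₀) • v with hu'def
      have hu'app : ∀ i, u' i = u i - t₀ * v i := by
        intro i; simp [hu'def]; ring
      have hu'nn : ∀ i, 0 ≤ u' i := by
        intro i
        rw [hu'app]
        by_cases hvi : v i = 0
        · rw [hvi]; simpa using hu.2.1 i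
        · have hiFv : i ∈ Fv := by simp [hFv, hvi]
          have h1 := hi₀min i hiFv
          have hvipos : 0 < v i := (hv.2.1 i).lt_of_ne (Ne.symm hvi)
          have : t₀ * v i ≤ u i := by
            rw [← le_div_iff₀ hvipos]; exact h1
          linarith
      have hu'i₀ : u' i₀ = 0 := by
        rw [hu'app, ht₀def, div_mul_cancel₀]
        · ring
        · exact ne_of_gt hvi₀
      have hform : u' ⬝ᵥ A.mulVec u' = 0 := by
        rw [hu'def, quad_expand A hA.1 u v (-t₀), hu.2.2, cross_zero hA hu v hVU, hv.2.2]
        ring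
      have hwv : w ⬝ᵥ v = 0 := IH v hv hcardv
      by_cases hu'0 : u' = 0
      · have huv : u = t₀ • v := by
          funext i
          have := congrFun hu'0 i
          rw [hu'app] at this
          simp only [Pi.zero_apply] at this
          simp only [Pi.smul_apply, smul_eq_mul]
          linarith [this]
        rw [huv, dotProduct_smul, hwv, smul_eq_mul, mul_zero]
      · -- u' is a zero with smaller support
        have hu'z : IsZeroOf A u' := ⟨hu'0, hu'nn, hform⟩
        have hsupp' : (univ.filter fun i => u' i ≠ 0) ⊆ Fu.erase i₀ := by
          intro i hi
          simp only [mem_filter, mem_univ, true_and] at hi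
          rw [Finset.mem_erase]
          constructor
          · rintro rfl; exact hi hu'i₀
          · simp only [hFu, mem_filter, mem_univ, true_and]
            intro hui
            apply hi
            rw [hu'app, hui]
            have : v i = 0 := by
              by_contra hvi
              exact hVU i hvi hui
            rw [this]; ring
        have hi₀Fu : i₀ ∈ Fu := hFvu hi₀Fv
        have hcard' : (univ.filter fun i => u' i ≠ 0).card ≤ k := by
          have h1 := Finset.card_le_card hsupp'
          have h2 := Finset.card_erase_of_mem hi₀Fu
          have h3 := Finset.card_pos.mpr ⟨i₀, hi₀Fu⟩
          omega
        have hwu' : w ⬝ᵥ u' = 0 := IH u' hu'z hcard'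
        have : w ⬝ᵥ u = w ⬝ᵥ u' + t₀ * (w ⬝ᵥ v) := by
          simp only [hu'def, dotProduct_add, dotProduct_smul, smul_eq_mul]
          ring
        rw [this, hwu', hwv]; ring


lemma sum_insert_mul (i : Fin (n+1)) (y : Fin n → ℝ) (c : Fin (n+1) → ℝ) :
    ∑ b, c b * (i.insertNth 0 y : Fin (n+1) → ℝ) b = ∑ b, c (i.succAbove b) * y b := by
  rw [Fin.sum_univ_succAbove _ i]
  simp [Fin.insertNth_apply_same, Fin.insertNth_apply_succAbove]

lemma quad_insert (A : Matrix (Fin (n+1)) (Fin (n+1)) ℝ) (i : Fin (n+1)) (y : Fin n → ℝ) :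
    (i.insertNth 0 y) ⬝ᵥ A.mulVec (i.insertNth 0 y)
      = y ⬝ᵥ (A.submatrix i.succAbove i.succAbove).mulVec y := by
  simp only [dotProduct, Matrix.mulVec, Matrix.submatrix_apply]
  rw [Fin.sum_univ_succAbove _ i]
  simp only [Fin.insertNth_apply_same, Fin.insertNth_apply_succAbove, zero_mul, zero_add]
  congr 1; ext j
  congr 1
  exact sum_insert_mul i y _

lemma dot_insert (w : Fin (n+1) → ℝ) (i : Fin (n+1)) (y : Fin n → ℝ) :
    w ⬝ᵥ (i.insertNth 0 y) = (w ∘ i.succAbove) ⬝ᵥ y := by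
  simp only [dotProduct, Function.comp]
  exact sum_insert_mul i y w

lemma insertNth_comp (x : Fin (n+1) → ℝ) (i : Fin (n+1)) (hxi : x i = 0) :
    i.insertNth 0 (fun j => x (i.succAbove j)) = x := by
  funext a
  rcases eq_or_ne a i with rfl | h
  · rw [Fin.insertNth_apply_same, hxi]
  · obtain ⟨b, rfl⟩ := Fin.exists_succAbove_eq h
    rw [Fin.insertNth_apply_succAbove]

lemma vecMulVec_submatrix (w : Fin (n+1) → ℝ) (i : Fin (n+1)) :
    (vecMulVec w w).submatrix i.succAbove i.succAbove
      = vecMulVec (w ∘ i.succAbove) (w ∘ i.succAbove) := by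
  ext a b; simp [Matrix.vecMulVec_apply]

lemma symmB (A : Matrix (Fin n) (Fin n) ℝ) (hA : A.IsSymm) (γ : ℝ) (w : Fin n → ℝ) :
    (A - γ • vecMulVec w w).IsSymm := by
  rw [Matrix.IsSymm] at *
  rw [Matrix.transpose_sub, hA, Matrix.transpose_smul]
  congr 1
  ext a b
  simp [Matrix.vecMulVec_apply, mul_comm]

lemma submatrix_symm (A : Matrix (Fin (n+1)) (Fin (n+1)) ℝ) (hA : A.IsSymm) (i : Fin (n+1)) :
    (A.submatrix i.succAbove i.succAbove).IsSymm := by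
  rw [Matrix.IsSymm] at *
  rw [Matrix.transpose_submatrix, hA]

def simplexSet (n : ℕ) : Set (Fin n → ℝ) := {x | (∀ i, 0 ≤ x i) ∧ ∑ i, x i = 1}

lemma isCompact_simplex : IsCompact (simplexSet n) := by
  have heq : simplexSet n = {x : Fin n → ℝ | ∀ i, 0 ≤ x i} ∩ {x | ∑ i, x i = 1} := rfl
  have h1 : IsClosed {x : Fin n → ℝ | ∀ i, 0 ≤ x i} := by
    have : {x : Fin n → ℝ | ∀ i, 0 ≤ x i} = ⋂ i, {x | 0 ≤ x i} := by ext; simp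
    rw [this]
    exact isClosed_iInter fun i => isClosed_le continuous_const (continuous_apply i)
  have h2 : IsClosed {x : Fin n → ℝ | ∑ i, x i = 1} :=
    isClosed_eq (continuous_finset_sum _ fun i _ => continuous_apply i) continuous_const
  have hclosed : IsClosed (simplexSet n) := heq ▸ h1.inter h2
  have hbdd : Bornology.IsBounded (simplexSet n) := by
    apply (Metric.isBounded_closedBall (x := (0 : Fin n → ℝ)) (r := 1)).subset
    intro x hx
    rw [Metric.mem_closedBall, dist_zero_right]
    refine (pi_norm_le_iff_of_nonneg zero_le_one).mpr fun i => ?_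
    rw [Real.norm_eq_abs, abs_of_nonneg (hx.1 i)]
    calc x i ≤ ∑ j, x j := Finset.single_le_sum (fun j _ => hx.1 j) (Finset.mem_univ i)
    _ = 1 := hx.2
  exact Metric.isCompact_of_isClosed_isBounded hclosed hbdd

lemma simplex_nonempty (hn : 0 < n) : (simplexSet n).Nonempty := by
  refine ⟨fun _ => 1 / n, fun i => by positivity, ?_⟩
  have : (n:ℝ) ≠ 0 := Nat.cast_ne_zero.mpr hn.ne'
  simp [Finset.sum_const, Finset.card_univ]
  field_simp

lemma cont_quad (B : Matrix (Fin n) (Fin n) ℝ) :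
    Continuous fun x : Fin n → ℝ => x ⬝ᵥ B.mulVec x := by
  simp only [dotProduct, Matrix.mulVec]
  exact continuous_finset_sum _ fun i _ =>
    (continuous_apply i).mul (continuous_finset_sum _ fun j _ =>
      continuous_const.mul (continuous_apply j))

lemma copos_of_simplex (B : Matrix (Fin n) (Fin n) ℝ)
    (hB : ∀ x ∈ simplexSet n, 0 ≤ x ⬝ᵥ B.mulVec x) :
    ∀ x : Fin n → ℝ, (∀ i, 0 ≤ x i) → 0 ≤ x ⬝ᵥ B.mulVec x := by
  intro x hx
  set s := ∑ i, x i with hs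
  rcases eq_or_lt_of_le (Finset.sum_nonneg fun i _ => hx i : (0:ℝ) ≤ s) with h | h
  · have hx0 : x = 0 := by
      funext i
      exact le_antisymm (by
        have := (Finset.sum_eq_zero_iff_of_nonneg (fun j _ => hx j)).mp h.symm i (Finset.mem_univ i)
        exact le_of_eq this) (hx i)
    simp [hx0]
  · have hmem : s⁻¹ • x ∈ simplexSet n := by
      constructor
      · intro i
        exact mul_nonneg (inv_nonneg.mpr h.le) (hx i)
      · simp only [Pi.smul_apply, smul_eq_mul, ← Finset.mul_sum, ← hs]
        field_simp
        exact div_self h.ne'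
    have h1 := hB _ hmem
    rw [quad_smul] at h1
    by_contra hneg
    push_neg at hneg
    have : (s⁻¹)^2 * (x ⬝ᵥ B.mulVec x) < 0 :=
      mul_neg_of_pos_of_neg (by positivity) hneg
    linarith

lemma key : ∀ (n : ℕ) (A : Matrix (Fin n) (Fin n) ℝ), Copositive A → ∀ w : Fin n → ℝ,
    (∀ u, IsZeroOf A u → w ⬝ᵥ u = 0) →
    ∃ γ : ℝ, 0 < γ ∧ Copositive (A - γ • vecMulVec w w) := by
  intro n
  induction n with
  | zero =>
    intro A hA w hz
    refine ⟨1, one_pos, ?_, ?_⟩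
    · rw [Matrix.IsSymm]; ext i j; exact i.elim0
    · intro x hx; simp [dotProduct]
  | succ n IH =>
    intro A hA w hz
    have hsub : ∀ i : Fin (n+1), ∃ γ : ℝ, 0 < γ ∧
        Copositive (A.submatrix i.succAbove i.succAbove
          - γ • vecMulVec (w ∘ i.succAbove) (w ∘ i.succAbove)) := by
      intro i
      have hAi : Copositive (A.submatrix i.succAbove i.succAbove) := by
        refine ⟨submatrix_symm A hA.1 i, fun y hy => ?_⟩
        have hx : ∀ j, 0 ≤ (i.insertNth 0 y : Fin (n+1) → ℝ) j := by
          intro j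
          rcases eq_or_ne j i with rfl | h
          · rw [Fin.insertNth_apply_same]
          · obtain ⟨b, rfl⟩ := Fin.exists_succAbove_eq h
            rw [Fin.insertNth_apply_succAbove]; exact hy b
        have := hA.2 _ hx
        rwa [quad_insert] at this
      apply IH _ hAi
      intro u hu
      have hins : IsZeroOf A (i.insertNth 0 u) := by
        refine ⟨?_, ?_, ?_⟩
        · obtain ⟨j, hj⟩ : ∃ j, u j ≠ 0 := Function.ne_iff.mp hu.1
          intro h0
          apply hj
          have := congrFun h0 (i.succAbove j)
          rwa [Fin.insertNth_apply_succAbove, Pi.zero_apply] at this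
        · intro j
          rcases eq_or_ne j i with rfl | h
          · rw [Fin.insertNth_apply_same]
          · obtain ⟨b, rfl⟩ := Fin.exists_succAbove_eq h
            rw [Fin.insertNth_apply_succAbove]; exact hu.2.1 b
        · rw [quad_insert]; exact hu.2.2
      have := hz _ hins
      rwa [dot_insert] at this
    choose γf hγpos hγcop using hsub
    have huniv : (Finset.univ : Finset (Fin (n+1))).Nonempty := Finset.univ_nonempty
    set γ₀ := Finset.univ.inf' huniv γf with hγ₀def
    have hγ₀pos : 0 < γ₀ := (Finset.lt_inf'_iff huniv).mpr fun i _ => hγpos i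
    have hγ₀le : ∀ i, γ₀ ≤ γf i := fun i => Finset.inf'_le _ (Finset.mem_univ i)
    set B := A - γ₀ • vecMulVec w w with hBdef
    have hBsymm : B.IsSymm := symmB A hA.1 γ₀ w
    have hboundary : ∀ x : Fin (n+1) → ℝ, (∀ j, 0 ≤ x j) → ∀ i, x i = 0 →
        0 ≤ x ⬝ᵥ B.mulVec x := by
      intro x hx i hxi
      rw [← insertNth_comp x i hxi, quad_insert]
      set y : Fin n → ℝ := fun j => x (i.succAbove j) with hy
      have hynn : ∀ j, 0 ≤ y j := fun j => hx _
      have hsubm : B.submatrix i.succAbove i.succAbove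
          = (A.submatrix i.succAbove i.succAbove
              - γf i • vecMulVec (w ∘ i.succAbove) (w ∘ i.succAbove))
            + (γf i - γ₀) • vecMulVec (w ∘ i.succAbove) (w ∘ i.succAbove) := by
        ext a b
        simp only [hBdef, Matrix.sub_apply, Matrix.add_apply, Matrix.smul_apply,
          Matrix.submatrix_apply, Matrix.vecMulVec_apply, Function.comp_apply, smul_eq_mul]
        ring
      rw [hsubm, Matrix.add_mulVec, dotProduct_add, Matrix.smul_mulVec,
        dotProduct_smul, smul_eq_mul, quad_vecMulVec]
      have h1 := (hγcop i).2 y hynn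
      have h2 : 0 ≤ (γf i - γ₀) * ((w ∘ i.succAbove) ⬝ᵥ y) ^ 2 :=
        mul_nonneg (sub_nonneg.mpr (hγ₀le i)) (sq_nonneg _)
      linarith
    by_cases hex : ∃ u, IsZeroOf A u
    · obtain ⟨u₀, hu₀⟩ := hex
      refine ⟨γ₀, hγ₀pos, hBsymm, copos_of_simplex B ?_⟩
      by_contra hneg
      push_neg at hneg
      obtain ⟨xneg, hxnegΔ, hxnegf⟩ := hneg
      obtain ⟨xh, hxhΔ, hxhmin'⟩ := isCompact_simplex.exists_isMinOn ⟨xneg, hxnegΔ⟩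
        (cont_quad B).continuousOn
      have hxhmin : ∀ y ∈ simplexSet (n+1), xh ⬝ᵥ B.mulVec xh ≤ y ⬝ᵥ B.mulVec y :=
        fun y hy => hxhmin' hy
      have hm : xh ⬝ᵥ B.mulVec xh < 0 := lt_of_le_of_lt (hxhmin xneg hxnegΔ) hxnegf
      have hint : ∀ i, 0 < xh i := by
        intro i
        rcases (hxhΔ.1 i).lt_or_eq with h | h
        · exact h
        · exact absurd (hboundary xh hxhΔ.1 i h.symm) (not_le.mpr hm)
      have hmul : ∀ d : Fin (n+1) → ℝ, (∑ i, d i) = 0 → d ⬝ᵥ B.mulVec xh = 0 := by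
        intro d hd
        set c := Finset.univ.inf' huniv xh with hcdef
        have hc : 0 < c := (Finset.lt_inf'_iff huniv).mpr fun i _ => hint i
        set Dm := Finset.univ.sup' huniv (fun i => |d i|) with hDmdef
        have hDm0 : 0 ≤ Dm :=
          le_trans (abs_nonneg (d 0)) (Finset.le_sup' (fun i => |d i|) (Finset.mem_univ (0 : Fin (n+1))))
        have hεpos : 0 < c / (Dm + 1) := by positivity
        apply aux_sign_zero hεpos
        intro t ht
        have hmemΔ : (xh + t • d) ∈ simplexSet (n+1) := by
          constructor
          · intro i
            have h1 : |t * d i| ≤ (c / (Dm + 1)) * Dm := by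
              rw [abs_mul]
              exact mul_le_mul ht (Finset.le_sup' (fun i => |d i|) (Finset.mem_univ i)) (abs_nonneg _) hεpos.le
            have h2 : (c / (Dm + 1)) * Dm < c := by
              rw [div_mul_eq_mul_div, div_lt_iff₀ (by positivity)]
              nlinarith
            have h3 : c ≤ xh i := Finset.inf'_le _ (Finset.mem_univ i)
            have h4 := neg_abs_le (t * d i)
            simp only [Pi.add_apply, Pi.smul_apply, smul_eq_mul]
            linarith
          · simp only [Pi.add_apply, Pi.smul_apply, smul_eq_mul]
            rw [Finset.sum_add_distrib, ← Finset.mul_sum, hd, hxhΔ.2]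
            ring
        have hle := hxhmin _ hmemΔ
        rw [quad_expand B hBsymm xh d t] at hle
        linarith
      set g := B.mulVec xh with hgdef
      set cb := (∑ j, g j) / ((n:ℝ)+1) with hcbdef
      have hcast : ((n:ℝ) + 1) ≠ 0 := by positivity
      have hdsum : (∑ i, (g i - cb)) = 0 := by
        rw [Finset.sum_sub_distrib, Finset.sum_const, Finset.card_univ, Fintype.card_fin,
          hcbdef, nsmul_eq_mul]
        push_cast
        field_simp
        ring
      have h0 := hmul (fun i => g i - cb) hdsum
      have hsq : (∑ i, (g i - cb)^2) = 0 := by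
        have hexp : (∑ i, (g i - cb)^2)
            = ((fun i => g i - cb) ⬝ᵥ g) - cb * (∑ i, (g i - cb)) := by
          simp only [dotProduct, Finset.mul_sum, ← Finset.sum_sub_distrib]
          congr 1; ext i; ring
        rw [hexp, h0, hdsum]
        ring
      have hgconst : ∀ i, g i = cb := by
        intro i
        have h1 := (Finset.sum_eq_zero_iff_of_nonneg
          (fun j _ => sq_nonneg (g j - cb))).mp hsq i (Finset.mem_univ i)
        have h2 : g i - cb = 0 := by
          have := sq_eq_zero_iff.mp h1
          exact this
        linarith
      have hcb : cb = xh ⬝ᵥ B.mulVec xh := by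
        calc cb = cb * (∑ i, xh i) := by rw [hxhΔ.2]; ring
        _ = ∑ i, xh i * cb := by rw [Finset.mul_sum]; congr 1; ext i; ring
        _ = ∑ i, xh i * g i := by congr 1; ext i; rw [hgconst i]
        _ = xh ⬝ᵥ B.mulVec xh := rfl
      have h1 : 0 ≤ xh ⬝ᵥ A.mulVec u₀ :=
        Finset.sum_nonneg fun i _ => mul_nonneg (hxhΔ.1 i) (mulVec_nonneg_of_zero hA hu₀ i)
      have h2 : xh ⬝ᵥ A.mulVec u₀ = u₀ ⬝ᵥ A.mulVec xh := symm_swap A hA.1 xh u₀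
      have h5 : w ⬝ᵥ u₀ = 0 := hz u₀ hu₀
      have h6 : u₀ ⬝ᵥ w = 0 := by rw [dotProduct_comm]; exact h5
      have h3 : u₀ ⬝ᵥ A.mulVec xh = u₀ ⬝ᵥ B.mulVec xh := by
        have : A.mulVec xh = B.mulVec xh + γ₀ • ((w ⬝ᵥ xh) • w) := by
          rw [hBdef, Matrix.sub_mulVec, Matrix.smul_mulVec, vecMulVec_mulVec']
          abel
        rw [this, dotProduct_add, dotProduct_smul, dotProduct_smul,
          h6]
        simp
      have h4 : u₀ ⬝ᵥ B.mulVec xh = cb * (∑ i, u₀ i) := by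
        calc u₀ ⬝ᵥ B.mulVec xh = ∑ i, u₀ i * g i := rfl
        _ = ∑ i, u₀ i * cb := by congr 1; ext i; rw [hgconst i]
        _ = cb * (∑ i, u₀ i) := by rw [Finset.mul_sum]; congr 1; ext i; ring
      have hSu : 0 < ∑ i, u₀ i := by
        obtain ⟨j, hj⟩ : ∃ j, u₀ j ≠ 0 := Function.ne_iff.mp hu₀.1
        exact Finset.sum_pos' (fun i _ => hu₀.2.1 i)
          ⟨j, Finset.mem_univ j, (hu₀.2.1 j).lt_of_ne (Ne.symm hj)⟩
      have hmlt : cb < 0 := by rw [hcb]; exact hm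
      nlinarith
    · push_neg at hex
      obtain ⟨xh, hxhΔ, hxhmin'⟩ := isCompact_simplex.exists_isMinOn
        (simplex_nonempty (Nat.succ_pos n)) (cont_quad A).continuousOn
      have hxhmin : ∀ y ∈ simplexSet (n+1), xh ⬝ᵥ A.mulVec xh ≤ y ⬝ᵥ A.mulVec y :=
        fun y hy => hxhmin' hy
      have hmpos : 0 < xh ⬝ᵥ A.mulVec xh := by
        rcases (hA.2 xh hxhΔ.1).lt_or_eq with h | h
        · exact h
        · exfalso
          apply hex xh
          refine ⟨?_, hxhΔ.1, h.symm⟩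
          intro h0
          rw [h0] at hxhΔ
          simpa using hxhΔ.2
      set m := xh ⬝ᵥ A.mulVec xh with hmdef
      set W := ∑ i, |w i| with hW
      have hWnn : 0 ≤ W := Finset.sum_nonneg fun i _ => abs_nonneg _
      refine ⟨m / (W^2 + 1), by positivity, symmB A hA.1 _ w, copos_of_simplex _ ?_⟩
      intro x hxΔ
      have hq : x ⬝ᵥ (A - (m/(W^2+1)) • vecMulVec w w).mulVec x
          = x ⬝ᵥ A.mulVec x - (m/(W^2+1)) * (w ⬝ᵥ x)^2 := by
        rw [Matrix.sub_mulVec, dotProduct_sub, Matrix.smul_mulVec,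
          dotProduct_smul, smul_eq_mul, quad_vecMulVec]
      rw [hq]
      have h1 : m ≤ x ⬝ᵥ A.mulVec x := hxhmin x hxΔ
      have h2 : |w ⬝ᵥ x| ≤ W := by
        calc |w ⬝ᵥ x| ≤ ∑ i, |w i * x i| := Finset.abs_sum_le_sum_abs _ _
        _ ≤ ∑ i, |w i| := by
          apply Finset.sum_le_sum
          intro i _
          rw [abs_mul]
          have hx1 : x i ≤ 1 := by
            calc x i ≤ ∑ j, x j :=
              Finset.single_le_sum (fun j _ => hxΔ.1 j) (Finset.mem_univ i)
            _ = 1 := hxΔ.2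
          rw [abs_of_nonneg (hxΔ.1 i)]
          nlinarith [abs_nonneg (w i)]
        _ = W := hW.symm
      have h3 : (w ⬝ᵥ x)^2 ≤ W^2 := by nlinarith [abs_nonneg (w ⬝ᵥ x), sq_abs (w ⬝ᵥ x)]
      have h4 : (m/(W^2+1)) * (w ⬝ᵥ x)^2 ≤ (m/(W^2+1)) * W^2 :=
        mul_le_mul_of_nonneg_left h3 (by positivity)
      have h5 : (m/(W^2+1)) * W^2 < m := by
        rw [div_mul_eq_mul_div, div_lt_iff₀ (by positivity)]
        nlinarith
      linarith

theorem stmt16 {n : ℕ} (A : Matrix (Fin n) (Fin n) ℝ) (hA : Copositive A)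
    (w : Fin n → ℝ) (hw : w ≠ 0) :
    IrreducibleWrtMat A (vecMulVec w w) ↔ ∃ u, IsMinimalZeroOf A u ∧ w ⬝ᵥ u ≠ 0 := by
  constructor
  · intro hirr
    by_contra hne
    push_neg at hne
    obtain ⟨γ, hγ, hcop⟩ := key n A hA w (dot_eq_zero_of_zero A hA w hne)
    exact hirr ⟨γ, hγ, hcop⟩
  · rintro ⟨u, hu, hwu⟩ ⟨γ, hγ, hcop⟩
    have hpos := hcop.2 u hu.1.2.1
    have hq : u ⬝ᵥ (A - γ • vecMulVec w w).mulVec u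
        = u ⬝ᵥ A.mulVec u - γ * (w ⬝ᵥ u)^2 := by
      rw [Matrix.sub_mulVec, dotProduct_sub, Matrix.smul_mulVec,
        dotProduct_smul, smul_eq_mul, quad_vecMulVec]
    rw [hq, hu.1.2.2] at hpos
    have : 0 < (w ⬝ᵥ u)^2 := by positivity
    nlinarith
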